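/- Let c > 0 be a real number, r a natural number, A a real number, and f : ℝ → ℝ a function. Assume that, as h → 0, f(−c + h) − A·h^r = O(h^{r+1}). Then, as σ → 0, f(−√(σ² + c²)) − A·(−σ²/(2c))^r = O(σ^{2r+2}). -/

import Mathlib

open Asymptotics Filter

private lemma pow_isBigO_pow_nhds_zero {m n : ℕ} (h : n ≤ m) :
    (fun σ : ℝ => σ ^ m) =O[nhds 0] fun σ : ℝ => σ ^ n := by
  have h1 : (fun σ : ℝ => σ ^ (m - n)) =O[nhds (0:ℝ)] (fun _ => (1:ℝ)) :=
    isBigO_const_of_tendsto (y := (0:ℝ) ^ (m - n)) ((continuous_pow _).tendsto 0) one_ne_zero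
  have h2 := (isBigO_refl (fun σ : ℝ => σ ^ n) (nhds 0)).mul h1
  have he : ∀ σ : ℝ, σ ^ m = σ ^ n * σ ^ (m - n) := by
    intro σ; rw [← pow_add]; congr 1; omega
  simpa [← he] using h2

private lemma pow_sub_pow_isBigO {l : Filter ℝ} {u v w z : ℝ → ℝ} (r : ℕ)
    (hu : u =O[l] w) (hv : v =O[l] w) (huv : (fun x => u x - v x) =O[l] z) :
    (fun x => u x ^ r - v x ^ r) =O[l] fun x => w x ^ (r - 1) * z x := by
  have key : ∀ x, u x ^ r - v x ^ r =
      (∑ i ∈ Finset.range r, u x ^ i * v x ^ (r - 1 - i)) * (u x - v x) :=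
    fun x => (geom_sum₂_mul (u x) (v x) r).symm
  have hsum : (fun x => ∑ i ∈ Finset.range r, u x ^ i * v x ^ (r - 1 - i))
      =O[l] fun x => w x ^ (r - 1) := by
    apply IsBigO.fun_sum
    intro i hi
    have hi' : i + (r - 1 - i) = r - 1 := by
      have := Finset.mem_range.mp hi; omega
    have := (hu.pow i).mul (hv.pow (r - 1 - i))
    calc (fun x => u x ^ i * v x ^ (r - 1 - i))
        =O[l] fun x => w x ^ i * w x ^ (r - 1 - i) := this
      _ = fun x => w x ^ (r - 1) := by
          funext x; rw [← pow_add, hi']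
  have := hsum.mul huv
  exact (this.congr_left fun x => (key x).symm)

/-- Let `c > 0`, `r ∈ ℕ`, `A ∈ ℝ` and `f : ℝ → ℝ`.  If `f(−c+h) − A·h^r = O(h^{r+1})` as
`h → 0`, then `f(−√(σ²+c²)) − A·(−σ²/(2c))^r = O(σ^{2r+2})` as `σ → 0`. -/
theorem isBigO_comp_neg_sqrt
    (c : ℝ) (hc : 0 < c) (r : ℕ) (A : ℝ) (f : ℝ → ℝ)
    (h : (fun h : ℝ => f (-c + h) - A * h ^ r) =O[nhds 0] fun h : ℝ => h ^ (r + 1)) :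
    (fun σ : ℝ => f (-Real.sqrt (σ ^ 2 + c ^ 2)) - A * (-σ ^ 2 / (2 * c)) ^ r)
      =O[nhds 0] fun σ : ℝ => σ ^ (2 * r + 2) := by
  set g : ℝ → ℝ := fun σ => c - Real.sqrt (σ ^ 2 + c ^ 2) with hgdef
  set m : ℝ → ℝ := fun σ => -σ ^ 2 / (2 * c) with hmdef
  -- basic facts about the square root
  have hs_nonneg : ∀ σ : ℝ, 0 ≤ Real.sqrt (σ ^ 2 + c ^ 2) := fun σ => Real.sqrt_nonneg _
  have hs_ge : ∀ σ : ℝ, c ≤ Real.sqrt (σ ^ 2 + c ^ 2) := by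
    intro σ
    have : c = Real.sqrt (c ^ 2) := (Real.sqrt_sq hc.le).symm
    rw [this]
    exact Real.sqrt_le_sqrt (by nlinarith [sq_nonneg σ])
  have hs_le : ∀ σ : ℝ, Real.sqrt (σ ^ 2 + c ^ 2) ≤ c + σ ^ 2 / c := by
    intro σ
    have h1 : σ ^ 2 + c ^ 2 ≤ (c + σ ^ 2 / c) ^ 2 := by
      have e : σ ^ 2 / c * c = σ ^ 2 := div_mul_cancel₀ _ hc.ne'
      nlinarith [e, sq_nonneg (σ ^ 2 / c), sq_nonneg σ, hc]
    calc Real.sqrt (σ ^ 2 + c ^ 2) ≤ Real.sqrt ((c + σ ^ 2 / c) ^ 2) := Real.sqrt_le_sqrt h1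
      _ = c + σ ^ 2 / c := Real.sqrt_sq (by positivity)
  -- g = O(σ²)
  have hG : g =O[nhds 0] fun σ : ℝ => σ ^ 2 := by
    rw [isBigO_iff]
    refine ⟨1 / c, Filter.Eventually.of_forall fun σ => ?_⟩
    have h1 := hs_ge σ
    have h2 := hs_le σ
    have : |g σ| ≤ σ ^ 2 / c := by
      rw [hgdef]
      rw [abs_le]
      constructor
      · simp only; nlinarith
      · simp only; nlinarith [sq_nonneg σ, div_nonneg (sq_nonneg σ) hc.le]
    calc |g σ| ≤ σ ^ 2 / c := this
      _ ≤ 1 / c * |σ ^ 2| := by rw [abs_of_nonneg (sq_nonneg σ)]; ring_nf; exact le_refl _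
  -- m = O(σ²)
  have hM : m =O[nhds 0] fun σ : ℝ => σ ^ 2 := by
    rw [isBigO_iff]
    refine ⟨1 / (2 * c), Filter.Eventually.of_forall fun σ => ?_⟩
    rw [hmdef]
    simp only [Real.norm_eq_abs, abs_div, abs_neg, abs_of_nonneg (sq_nonneg σ)]
    rw [abs_of_pos (by positivity : (0:ℝ) < 2 * c)]
    rw [div_le_iff₀ (by positivity : (0:ℝ) < 2 * c)]
    have e : 1 / (2 * c) * σ ^ 2 * (2 * c) = σ ^ 2 := by field_simp
    linarith [e]
  -- g - m = O(σ⁴)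
  have hGM : (fun σ => g σ - m σ) =O[nhds 0] fun σ : ℝ => σ ^ 4 := by
    rw [isBigO_iff]
    refine ⟨1 / (2 * c ^ 3), Filter.Eventually.of_forall fun σ => ?_⟩
    set s := Real.sqrt (σ ^ 2 + c ^ 2) with hsdef
    have hs2 : s ^ 2 = σ ^ 2 + c ^ 2 := Real.sq_sqrt (by positivity)
    have h1 := hs_ge σ
    have h2 := hs_le σ
    have hkey : g σ - m σ = (s - c) ^ 2 / (2 * c) := by
      rw [hgdef, hmdef]
      simp only
      rw [← hsdef]
      have : σ ^ 2 = s ^ 2 - c ^ 2 := by linarith [hs2]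
      rw [this]
      field_simp
      ring
    rw [hkey]
    have hsc : s - c ≤ σ ^ 2 / c := by linarith
    have hsc0 : 0 ≤ s - c := by linarith
    have habs : |(s - c) ^ 2 / (2 * c)| = (s - c) ^ 2 / (2 * c) := by
      rw [abs_of_nonneg (by positivity)]
    simp only [Real.norm_eq_abs]
    rw [habs, abs_of_nonneg (by positivity : (0:ℝ) ≤ σ ^ 4)]
    rw [div_le_iff₀ (by positivity)]
    have h3 : (s - c) ^ 2 ≤ (σ ^ 2 / c) ^ 2 := by nlinarith
    have h4 : (σ ^ 2 / c) ^ 2 = σ ^ 4 / c ^ 2 := by field_simp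
    calc (s - c) ^ 2 ≤ σ ^ 4 / c ^ 2 := by rw [← h4]; exact h3
      _ = 1 / (2 * c ^ 3) * σ ^ 4 * (2 * c) := by field_simp
  -- g tends to 0
  have htend : Filter.Tendsto g (nhds 0) (nhds 0) := by
    have hcont : Continuous g := by
      rw [hgdef]
      exact continuous_const.sub (Real.continuous_sqrt.comp ((continuous_pow 2).add continuous_const))
    have hg0 : g 0 = 0 := by
      rw [hgdef]; simp [Real.sqrt_sq hc.le]
    simpa [hg0] using hcont.tendsto 0
  -- first piece
  have term1 : (fun σ => f (-c + g σ) - A * g σ ^ r) =O[nhds 0] fun σ : ℝ => σ ^ (2 * r + 2) := by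
    have h1 := h.comp_tendsto htend
    have h2 : (fun σ => g σ ^ (r + 1)) =O[nhds 0] fun σ : ℝ => (σ ^ 2) ^ (r + 1) := hG.pow _
    have h3 : (fun σ : ℝ => (σ ^ 2) ^ (r + 1)) = fun σ : ℝ => σ ^ (2 * r + 2) := by
      funext σ; rw [← pow_mul]; ring_nf
    calc (fun σ => f (-c + g σ) - A * g σ ^ r) =O[nhds 0] fun σ => g σ ^ (r + 1) := h1
      _ =O[nhds 0] fun σ : ℝ => σ ^ (2 * r + 2) := by rw [← h3]; exact h2
  -- second piece
  have term2 : (fun σ => A * (g σ ^ r - m σ ^ r)) =O[nhds 0] fun σ : ℝ => σ ^ (2 * r + 2) := by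
    have h1 := pow_sub_pow_isBigO r hG hM hGM
    have h2 : (fun σ : ℝ => (σ ^ 2) ^ (r - 1) * σ ^ 4) = fun σ : ℝ => σ ^ (2 * (r - 1) + 4) := by
      funext σ; rw [← pow_mul, ← pow_add]
    have h3 : (fun σ : ℝ => σ ^ (2 * (r - 1) + 4)) =O[nhds 0] fun σ : ℝ => σ ^ (2 * r + 2) :=
      pow_isBigO_pow_nhds_zero (by omega)
    have h4 : (fun σ => g σ ^ r - m σ ^ r) =O[nhds 0] fun σ : ℝ => σ ^ (2 * r + 2) := by
      calc (fun σ => g σ ^ r - m σ ^ r)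
          =O[nhds 0] fun σ : ℝ => (σ ^ 2) ^ (r - 1) * σ ^ 4 := h1
        _ =O[nhds 0] fun σ : ℝ => σ ^ (2 * r + 2) := by rw [h2]; exact h3
    exact (h4.const_mul_left A)
  -- assemble
  have heq : (fun σ : ℝ => f (-Real.sqrt (σ ^ 2 + c ^ 2)) - A * (-σ ^ 2 / (2 * c)) ^ r)
      = fun σ => (f (-c + g σ) - A * g σ ^ r) + A * (g σ ^ r - m σ ^ r) := by
    funext σ
    have : -Real.sqrt (σ ^ 2 + c ^ 2) = -c + g σ := by rw [hgdef]; ring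
    rw [this, hmdef]
    ring
  rw [heq]
  exact term1.add term2
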